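/- Let V_1, …, V_{n+1} be exchangeable real-valued random variables on a common probability space, and let α ∈ (0,1). Then P( V_{n+1} ≤ Quantile(α; {V_1, …, V_n} ∪ {+∞}) ) ≥ α, where the quantile is taken of the inflated empirical sample of size n+1 consisting of the n calibration values together with the point +∞. -/

import Mathlib

open MeasureTheory ProbabilityTheory

/-- The empirical `α`-quantile of a finite multiset `S` of values in `ℝ ∪ {+∞}`:
the `⌈α · |S|⌉`-th smallest element of `S`, counted with multiplicity. -/
noncomputable def empQuantile (α : ℝ) (S : Multiset (WithTop ℝ)) : WithTop ℝ :=
  (S.sort (· ≤ ·)).getD (⌈α * (S.card : ℝ)⌉.toNat - 1) ⊤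

/-- Random variables `Z 0, …, Z (m-1)` are exchangeable if their joint distribution is
invariant under every permutation of the indices. -/
def Exchangeable {Ω α : Type*} [MeasurableSpace Ω] [MeasurableSpace α]
    (P : Measure Ω) {m : ℕ} (Z : Fin m → Ω → α) : Prop :=
  ∀ σ : Equiv.Perm (Fin m),
    Measure.map (fun ω i => Z (σ i) ω) P = Measure.map (fun ω i => Z i ω) P

lemma sorted_le_getElem_iff {L : List (WithTop ℝ)} (hL : L.Pairwise (· ≤ ·)) {j : ℕ}
    (hj : j < L.length) (v : WithTop ℝ) :
    v ≤ L[j] ↔ L.countP (fun s => decide (s < v)) ≤ j := by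
  have hmono : ∀ (a b : ℕ) (hab : a ≤ b) (hb : b < L.length), L[a] ≤ L[b] := by
    intro a b hab hb
    rcases eq_or_lt_of_le hab with rfl | h
    · exact le_refl _
    · have := List.pairwise_iff_get.1 hL ⟨a, lt_of_le_of_lt hab hb⟩ ⟨b, hb⟩ h
      simpa using this
  have hsplit := List.countP_append (p := fun s => decide (s < v)) (l₁ := L.take j) (l₂ := L.drop j)
  rw [List.take_append_drop] at hsplit
  constructor
  · intro h
    rw [hsplit]
    have h1 : List.countP (fun s => decide (s < v)) (L.take j) ≤ j := by
      calc List.countP (fun s => decide (s < v)) (L.take j) ≤ (L.take j).length :=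
            List.countP_le_length
        _ ≤ j := by simp [List.length_take]
    have h2 : List.countP (fun s => decide (s < v)) (L.drop j) = 0 := by
      rw [List.countP_eq_zero]
      intro a ha
      rw [List.mem_drop_iff_getElem] at ha
      obtain ⟨i, hi, rfl⟩ := ha
      simp only [decide_eq_true_eq]
      exact not_lt.2 (le_trans h (hmono j (j+i) (Nat.le_add_right _ _) (by omega)))
    omega
  · intro h
    by_contra hlt
    push_neg at hlt
    have h1 : List.countP (fun s => decide (s < v)) (L.take (j+1)) = j + 1 := by
      have hall : ∀ a ∈ L.take (j+1), (fun s => decide (s < v)) a = true := by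
        intro a ha
        rw [List.mem_take_iff_getElem] at ha
        obtain ⟨i, hi, rfl⟩ := ha
        simp only [lt_inf_iff] at hi
        simp only [decide_eq_true_eq]
        exact lt_of_le_of_lt (hmono i j (by omega) hj) hlt
      rw [List.countP_eq_length.2 hall, List.length_take]
      omega
    have hsplit2 := List.countP_append (p := fun s => decide (s < v)) (l₁ := L.take (j+1)) (l₂ := L.drop (j+1))
    rw [List.take_append_drop] at hsplit2
    omega

lemma rank_filter_card {m : ℕ} (x : Fin m → ℝ) {k : ℕ} (hkm : k ≤ m) :
    k ≤ (Finset.univ.filter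
      (fun i => (Finset.univ.filter (fun j => x j < x i)).card < k)).card := by
  set e := Tuple.sort x with he
  have hrank : ∀ w : Fin m, (Finset.univ.filter (fun j => x j < x (e w))).card ≤ (w : ℕ) := by
    intro w
    have h1 : (Finset.univ.filter (fun j => x j < x (e w))).card ≤ (Finset.Iio w).card := by
      apply Finset.card_le_card_of_injOn (fun l => e.symm l)
      · intro l hl
        simp only [Finset.mem_coe, Finset.mem_filter, Finset.mem_univ, true_and] at hl
        simp only [Finset.mem_coe, Finset.mem_Iio]
        by_contra hge
        push_neg at hge
        have := Tuple.monotone_sort x hge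
        simp only [← he, Function.comp_apply, Equiv.apply_symm_apply] at this
        exact absurd hl (not_lt.2 this)
      · exact fun a _ b _ hab => e.symm.injective hab
    simpa [Fin.card_Iio] using h1
  calc k = (Finset.univ : Finset (Fin k)).card := by simp
    _ ≤ _ := by
        apply Finset.card_le_card_of_injOn (fun j => e (Fin.castLE hkm j))
        · intro j _
          simp only [Finset.mem_coe, Finset.mem_filter, Finset.mem_univ, true_and]
          exact lt_of_le_of_lt (hrank (Fin.castLE hkm j)) j.isLt
        · intro a _ b _ hab
          exact Fin.castLE_injective hkm (e.injective hab)


open scoped ENNReal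

/-- The set of tuples where coordinate `i` has rank `< k`. -/
def rankSet (m k : ℕ) (i : Fin m) : Set (Fin m → ℝ) :=
  {x | (Finset.univ.filter (fun j => x j < x i)).card < k}

lemma measurable_rankSet (m k : ℕ) (i : Fin m) : MeasurableSet (rankSet m k i) := by
  have hf : Measurable (fun x : Fin m → ℝ => ∑ j : Fin m, if x j < x i then (1:ℕ) else 0) := by
    apply Finset.measurable_sum
    intro j _
    exact Measurable.ite (measurableSet_lt (measurable_pi_apply j) (measurable_pi_apply i))
      measurable_const measurable_const
  have hs : rankSet m k i =
      (fun x : Fin m → ℝ => ∑ j : Fin m, if x j < x i then (1:ℕ) else 0) ⁻¹' (Set.Iio k) := by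
    ext x
    simp only [rankSet, Set.mem_setOf_eq, Set.mem_preimage, Set.mem_Iio, ← Finset.card_filter]
  rw [hs]
  exact hf (by trivial)

lemma rankSet_perm (m k : ℕ) (σ : Equiv.Perm (Fin m)) (i : Fin m) :
    (fun x : Fin m → ℝ => fun j => x (σ j)) ⁻¹' rankSet m k i = rankSet m k (σ i) := by
  ext x
  simp only [rankSet, Set.mem_preimage, Set.mem_setOf_eq]
  have h2 : (Finset.univ.filter (fun j => x (σ j) < x (σ i))).card =
      (Finset.univ.filter (fun j => x j < x (σ i))).card := by
    rw [Finset.card_filter, Finset.card_filter]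
    exact Equiv.sum_comp σ (fun j => if x j < x (σ i) then 1 else 0)
  rw [h2]

lemma event_iff_rank {n : ℕ} (x : Fin (n+1) → ℝ) {k : ℕ} (α : ℝ)
    (hk : k = (⌈α * ((n:ℝ)+1)⌉).toNat) (hk1 : 1 ≤ k) (hk2 : k ≤ n + 1) :
    (((x (Fin.last n) : ℝ) : WithTop ℝ) ≤ empQuantile α
      ((⊤ : WithTop ℝ) ::ₘ (Finset.univ : Finset (Fin n)).val.map
        (fun i => ((x i.castSucc : ℝ) : WithTop ℝ)))) ↔
    (Finset.univ.filter (fun j => x j < x (Fin.last n))).card < k := by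
  set v : WithTop ℝ := ((x (Fin.last n) : ℝ) : WithTop ℝ) with hv
  set S : Multiset (WithTop ℝ) :=
    (⊤ : WithTop ℝ) ::ₘ (Finset.univ : Finset (Fin n)).val.map
        (fun i => ((x i.castSucc : ℝ) : WithTop ℝ)) with hS
  have hcard : (Multiset.card S) = n + 1 := by simp [hS]
  set L : List (WithTop ℝ) := S.sort (· ≤ ·) with hL
  have hlen : L.length = n + 1 := by simp [hL, hcard]
  have hsorted : L.Pairwise (· ≤ ·) := Multiset.pairwise_sort _ _
  have hjlt : k - 1 < L.length := by omega
  have hidx : (⌈α * ((n+1:ℕ) : ℝ)⌉).toNat - 1 = k - 1 := by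
    rw [hk]; push_cast; ring_nf
  have hquant : empQuantile α S = L[k-1] := by
    rw [empQuantile, hcard, hidx]
    exact List.getD_eq_getElem _ _ hjlt
  have hcount : L.countP (fun s => decide (s < v)) =
      (Finset.univ.filter (fun i : Fin n => x i.castSucc < x (Fin.last n))).card := by
    have h1 : (Multiset.countP (fun s => s < v) S) = L.countP (fun s => decide (s < v)) := by
      conv_lhs => rw [← Multiset.sort_eq S (· ≤ ·)]
      exact Multiset.coe_countP _ _
    rw [← h1, hS, Multiset.countP_cons]
    simp only [not_top_lt, if_false, add_zero, Multiset.countP_map]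
    rw [← Finset.filter_val, ← Finset.card_def]
    simp only [hv, WithTop.coe_lt_coe]
  have hsplit : (Finset.univ.filter (fun j : Fin (n+1) => x j < x (Fin.last n))).card =
      (Finset.univ.filter (fun i : Fin n => x i.castSucc < x (Fin.last n))).card := by
    rw [Finset.card_filter, Finset.card_filter, Fin.sum_univ_castSucc]
    simp
  rw [hquant, sorted_le_getElem_iff hsorted hjlt v, hcount, hsplit]
  omega

/-- If `V 0, …, V n` are exchangeable real random variables and `α ∈ (0,1)`, then
`P(V_{n+1} ≤ Quantile(α; {V_1, …, V_n} ∪ {+∞})) ≥ α`. -/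
theorem conformal_quantile_coverage
    {Ω : Type*} [MeasurableSpace Ω] (P : Measure Ω) [IsProbabilityMeasure P]
    {n : ℕ} (V : Fin (n + 1) → Ω → ℝ) (hVmeas : ∀ i, Measurable (V i))
    (hexch : Exchangeable P V)
    (α : ℝ) (hα : α ∈ Set.Ioo (0 : ℝ) 1) :
    ENNReal.ofReal α ≤
      P {ω | ((V (Fin.last n) ω : ℝ) : WithTop ℝ) ≤
        empQuantile α
          ((⊤ : WithTop ℝ) ::ₘ
            ((Finset.univ : Finset (Fin n)).val.map
              fun i => ((V i.castSucc ω : ℝ) : WithTop ℝ)))} := by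
  obtain ⟨hα0, hα1⟩ := hα
  set k : ℕ := (⌈α * ((n:ℝ)+1)⌉).toNat with hkdef
  have hpos : (0:ℝ) < α * ((n:ℝ)+1) := by positivity
  have hk1 : 1 ≤ k := by
    have : (0:ℤ) < ⌈α * ((n:ℝ)+1)⌉ := Int.ceil_pos.2 hpos
    omega
  have hceil_le : ⌈α * ((n:ℝ)+1)⌉ ≤ (n:ℤ) + 1 := by
    apply Int.ceil_le.2
    push_cast
    nlinarith
  have hk2 : k ≤ n + 1 := by
    have h0 : (0:ℤ) ≤ ⌈α * ((n:ℝ)+1)⌉ := le_of_lt (Int.ceil_pos.2 hpos)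
    omega
  have hF : Measurable (fun ω => fun j => V j ω) := measurable_pi_lambda _ hVmeas
  set E : Fin (n+1) → Set Ω :=
    fun i => (fun ω => fun j => V j ω) ⁻¹' rankSet (n+1) k i with hE
  have hEmeas : ∀ i, MeasurableSet (E i) := fun i => hF (measurable_rankSet _ _ i)
  -- exchangeability transfer
  have hPeq : ∀ i, P (E i) = P (E (Fin.last n)) := by
    intro i
    set σ : Equiv.Perm (Fin (n+1)) := Equiv.swap i (Fin.last n) with hσ
    have hmapeq := hexch σ
    set g : (Fin (n+1) → ℝ) → (Fin (n+1) → ℝ) := fun x => fun j => x (σ j) with hg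
    have hgmeas : Measurable g := measurable_pi_lambda _ fun j => measurable_pi_apply _
    have hcomp : (fun ω => fun j => V (σ j) ω) = g ∘ (fun ω => fun j => V j ω) := rfl
    have happly := congrArg
      (fun μ : Measure (Fin (n+1) → ℝ) => μ (rankSet (n+1) k (Fin.last n))) hmapeq
    simp only [hcomp] at happly
    rw [Measure.map_apply (hgmeas.comp hF) (measurable_rankSet _ _ _),
        Measure.map_apply hF (measurable_rankSet _ _ _)] at happly
    rw [Set.preimage_comp, hg, rankSet_perm (n+1) k σ (Fin.last n)] at happly
    have hlast : σ (Fin.last n) = i := Equiv.swap_apply_right i (Fin.last n)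
    rw [hlast] at happly
    exact happly
  -- sum of indicator bound
  have hsum_ge : (k : ℝ≥0∞) ≤ ∑ i : Fin (n+1), P (E i) := by
    have hpt : ∀ ω, (k : ℝ≥0∞) ≤ ∑ i : Fin (n+1), (E i).indicator (1 : Ω → ℝ≥0∞) ω := by
      intro ω
      have h1 : ∑ i : Fin (n+1), (E i).indicator (1 : Ω → ℝ≥0∞) ω =
          ((Finset.univ.filter (fun i : Fin (n+1) =>
            (Finset.univ.filter (fun j => V j ω < V i ω)).card < k)).card : ℝ≥0∞) := by
        rw [Finset.card_filter]
        push_cast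
        apply Finset.sum_congr rfl
        intro i _
        by_cases h : (Finset.univ.filter (fun j => V j ω < V i ω)).card < k
        · have hmem : ω ∈ E i := h
          simp [Set.indicator_of_mem hmem, h]
        · have hmem : ω ∉ E i := h
          simp [Set.indicator_of_notMem hmem, h]
      rw [h1]
      have h2 := rank_filter_card (fun j => V j ω) hk2
      exact_mod_cast h2
    calc (k : ℝ≥0∞) = ∫⁻ _, (k : ℝ≥0∞) ∂P := by simp
      _ ≤ ∫⁻ ω, ∑ i : Fin (n+1), (E i).indicator (1 : Ω → ℝ≥0∞) ω ∂P := lintegral_mono hpt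
      _ = ∑ i : Fin (n+1), ∫⁻ ω, (E i).indicator (1 : Ω → ℝ≥0∞) ω ∂P :=
          lintegral_finset_sum _ (fun i _ => measurable_one.indicator (hEmeas i))
      _ = ∑ i : Fin (n+1), P (E i) := by
          apply Finset.sum_congr rfl
          intro i _
          exact lintegral_indicator_one (hEmeas i)
  have hsum_eq : ∑ i : Fin (n+1), P (E i) = (n+1 : ℝ≥0∞) * P (E (Fin.last n)) := by
    rw [Finset.sum_congr rfl (fun i _ => hPeq i), Finset.sum_const, Finset.card_univ,
      Fintype.card_fin, nsmul_eq_mul]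
    push_cast
    ring
  have hmain : (k : ℝ≥0∞) ≤ (n+1 : ℝ≥0∞) * P (E (Fin.last n)) := hsum_eq ▸ hsum_ge
  -- identify the event
  have hset : {ω | ((V (Fin.last n) ω : ℝ) : WithTop ℝ) ≤
        empQuantile α
          ((⊤ : WithTop ℝ) ::ₘ
            ((Finset.univ : Finset (Fin n)).val.map
              fun i => ((V i.castSucc ω : ℝ) : WithTop ℝ)))} = E (Fin.last n) := by
    ext ω
    show _ ↔ ω ∈ E (Fin.last n)
    have hmem : ω ∈ E (Fin.last n) ↔
        (Finset.univ.filter (fun j => V j ω < V (Fin.last n) ω)).card < k := Iff.rfl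
    rw [hmem, Set.mem_setOf_eq]
    exact event_iff_rank (fun j => V j ω) α hkdef hk1 hk2
  rw [hset]
  -- final arithmetic
  have hαk : ENNReal.ofReal α * (n+1 : ℝ≥0∞) ≤ (k : ℝ≥0∞) := by
    have h2 : ((⌈α * ((n:ℝ)+1)⌉ : ℤ) : ℝ) = (k : ℝ) := by
      have h0 : ((k : ℤ)) = ⌈α * ((n:ℝ)+1)⌉ := by
        rw [hkdef]; exact Int.toNat_of_nonneg (le_of_lt (Int.ceil_pos.2 hpos))
      exact_mod_cast congrArg (fun z : ℤ => (z : ℝ)) h0.symm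
    have h1 : α * ((n:ℝ)+1) ≤ (k : ℝ) := by
      have := Int.le_ceil (α * ((n:ℝ)+1))
      linarith [h2 ▸ this]
    calc ENNReal.ofReal α * (n+1 : ℝ≥0∞) = ENNReal.ofReal (α * ((n:ℝ)+1)) := by
          rw [ENNReal.ofReal_mul (le_of_lt hα0)]
          congr 1
          rw [ENNReal.ofReal_add (by positivity) zero_le_one]
          simp
      _ ≤ ENNReal.ofReal (k : ℝ) := ENNReal.ofReal_le_ofReal h1
      _ = (k : ℝ≥0∞) := ENNReal.ofReal_natCast k
  have hne0 : (n+1 : ℝ≥0∞) ≠ 0 := by simp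
  have hnetop : (n+1 : ℝ≥0∞) ≠ ⊤ := by
    simp [ENNReal.add_ne_top]
  have h3 : ENNReal.ofReal α ≤ (k : ℝ≥0∞) / (n+1 : ℝ≥0∞) :=
    (ENNReal.le_div_iff_mul_le (Or.inl hne0) (Or.inl hnetop)).2 hαk
  have h4 : (k : ℝ≥0∞) / (n+1 : ℝ≥0∞) ≤ P (E (Fin.last n)) :=
    (ENNReal.div_le_iff_le_mul (Or.inl hne0) (Or.inl hnetop)).2 (by rwa [mul_comm] at hmain)
  exact le_trans h3 h4
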